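/- If every connected component of a simple graph G is bipartite or complete multipartite, then G is perfect and paw-free. -/

import Mathlib

/-- The paw graph: vertices `a = 0`, `b = 1`, `c = 2`, `d = 3`,
with edge set `{ab, ac, bc, cd}`. -/
def pawGraph : SimpleGraph (Fin 4) :=
  SimpleGraph.fromEdgeSet {s(0, 1), s(0, 2), s(1, 2), s(2, 3)}

/-- A graph is paw-free if no induced subgraph is isomorphic to the paw. -/
def SimpleGraph.PawFree {V : Type*} (G : SimpleGraph V) : Prop :=
  ¬ ∃ S : Set V, Nonempty (G.induce S ≃g pawGraph)

/-- A graph is perfect if every induced subgraph has chromatic number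
equal to its clique number. -/
def SimpleGraph.IsPerfect {V : Type*} (G : SimpleGraph V) : Prop :=
  ∀ S : Set V, (G.induce S).chromaticNumber = ((G.induce S).cliqueNum : ℕ∞)

/-- A proper coloring is a perfect coloring if every vertex set `S` inducing a
connected subgraph sees exactly `ω(G[S])` distinct colors. -/
def SimpleGraph.IsPerfectColoring {V α : Type*} (G : SimpleGraph V) (C : G.Coloring α) :
    Prop :=
  ∀ S : Set V, (G.induce S).Connected → (⇑C '' S).ncard = (G.induce S).cliqueNum

/-- A graph is perfectly colorable if it admits a perfect coloring. -/
def SimpleGraph.PerfectlyColorable {V : Type*} (G : SimpleGraph V) : Prop :=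
  ∃ (α : Type) (C : G.Coloring α), G.IsPerfectColoring C

/-- A graph is complete multipartite iff non-adjacency is transitive. -/
def SimpleGraph.IsCompleteMultipartite' {V : Type*} (G : SimpleGraph V) : Prop :=
  Transitive fun v w => ¬ G.Adj v w



open SimpleGraph

lemma aux_cm_of_embedding {V W : Type*} {G : SimpleGraph V} {H : SimpleGraph W}
    (f : G ↪g H) (h : H.IsCompleteMultipartite') : G.IsCompleteMultipartite' := by
  intro a b c hab hbc hac
  exact h (fun h' => hab (f.map_adj_iff.mp h')) (fun h' => hbc (f.map_adj_iff.mp h'))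
    (f.map_adj_iff.mpr hac)

lemma aux_cm_colorable {W : Type*} [Fintype W] (H : SimpleGraph W)
    (h : H.IsCompleteMultipartite') : H.Colorable H.cliqueNum := by
  classical
  let s : Setoid W := ⟨fun v w => ¬ H.Adj v w,
    ⟨fun v => H.irrefl, fun h' ha => h' ha.symm, fun h1 h2 => h h1 h2⟩⟩
  have C : H.Coloring (Quotient s) :=
    Coloring.mk (Quotient.mk s)
      (fun {v w} hadj heq => (Quotient.eq.mp heq : ¬ H.Adj v w) hadj)
  have hcol : H.Colorable (Fintype.card (Quotient s)) := C.colorable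
  refine hcol.mono ?_
  have hinj : Function.Injective (Quotient.out : Quotient s → W) := Quotient.out_injective
  have hclique : H.IsClique ↑(Finset.univ.image (Quotient.out : Quotient s → W)) := by
    intro a ha b hb hab
    simp only [Finset.coe_image, Set.mem_image] at ha hb
    obtain ⟨qa, -, rfl⟩ := ha
    obtain ⟨qb, -, rfl⟩ := hb
    by_contra hna
    exact hab (by rw [show qa = qb from by
      rw [← Quotient.out_eq qa, ← Quotient.out_eq qb]; exact Quotient.sound hna])
  have hcard : (Finset.univ.image (Quotient.out : Quotient s → W)).card
      = Fintype.card (Quotient s) := by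
    rw [Finset.card_image_of_injective _ hinj, Finset.card_univ]
  calc Fintype.card (Quotient s) = _ := hcard.symm
    _ ≤ H.cliqueNum := IsClique.card_le_cliqueNum (tc := hclique)

lemma aux_bip_colorable {W : Type*} [Fintype W] (H : SimpleGraph W)
    (h : H.Colorable 2) : H.Colorable H.cliqueNum := by
  classical
  by_cases he : ∃ v w, H.Adj v w
  · obtain ⟨v, w, hvw⟩ := he
    refine h.mono ?_
    have hclique : H.IsClique ↑({v, w} : Finset W) := by
      simp [Set.pairwise_insert, hvw, hvw.symm, IsClique]
    have hcard : ({v, w} : Finset W).card = 2 := by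
      rw [Finset.card_insert_of_notMem (by simp [hvw.ne]), Finset.card_singleton]
    calc 2 = ({v, w} : Finset W).card := hcard.symm
      _ ≤ H.cliqueNum := IsClique.card_le_cliqueNum (tc := hclique)
  · push_neg at he
    rcases isEmpty_or_nonempty W with hW | hW
    · exact Colorable.of_isEmpty _
    · have h1 : H.Colorable 1 :=
        ⟨Coloring.mk (fun _ => 0) (fun {v w} hadj => absurd hadj (he v w))⟩
      refine h1.mono ?_
      obtain ⟨v⟩ := hW
      have hclique : H.IsClique ↑({v} : Finset W) := by simp
      calc 1 = ({v} : Finset W).card := (Finset.card_singleton v).symm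
        _ ≤ H.cliqueNum := IsClique.card_le_cliqueNum (tc := hclique)

lemma aux_cliqueNum_induce_le {V : Type*} [Fintype V] (G : SimpleGraph V) (s : Set V)
    [Fintype s] : (G.induce s).cliqueNum ≤ G.cliqueNum := by
  classical
  obtain ⟨t, ht⟩ := (G.induce s).exists_isNClique_cliqueNum
  have hclique : G.IsClique ↑(t.image (Subtype.val : s → V)) := by
    intro x hx y hy hxy
    simp only [Finset.coe_image, Set.mem_image, Finset.mem_coe] at hx hy
    obtain ⟨a, ha, rfl⟩ := hx
    obtain ⟨b, hb, rfl⟩ := hy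
    have hab : a ≠ b := fun hh => hxy (by rw [hh])
    exact ht.1 ha hb hab
  have hcard : (t.image (Subtype.val : s → V)).card = (G.induce s).cliqueNum := by
    rw [Finset.card_image_of_injective _ Subtype.val_injective, ht.2]
  calc (G.induce s).cliqueNum = _ := hcard.symm
    _ ≤ G.cliqueNum := IsClique.card_le_cliqueNum (tc := hclique)

lemma aux_key {V : Type*} [Fintype V] (G : SimpleGraph V)
    (h : ∀ c : G.ConnectedComponent,
      (G.induce c.supp).Colorable 2 ∨ (G.induce c.supp).IsCompleteMultipartite') :
    G.chromaticNumber = (G.cliqueNum : ℕ∞) := by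
  classical
  have hcomp : ∀ c : G.ConnectedComponent, (G.induce c.supp).Colorable G.cliqueNum := by
    intro c
    haveI : Fintype ↥c.supp := Fintype.ofFinite _
    have h1 : (G.induce c.supp).Colorable (G.induce c.supp).cliqueNum :=
      (h c).elim (aux_bip_colorable _) (aux_cm_colorable _)
    exact h1.mono (aux_cliqueNum_induce_le G c.supp)
  have hcol : G.Colorable G.cliqueNum := by
    set n := G.cliqueNum with hn
    let CC : ∀ c : G.ConnectedComponent, (G.induce c.supp).Coloring (Fin n) :=
      fun c => (hcomp c).some
    let D : V → Fin n := fun v => CC (G.connectedComponentMk v) ⟨v, rfl⟩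
    have hD : ∀ (c : G.ConnectedComponent) (v : V) (hv : v ∈ c.supp),
        D v = CC c ⟨v, hv⟩ := by
      intro c v hv
      have hv' : G.connectedComponentMk v = c := (ConnectedComponent.mem_supp_iff _ _).mp hv
      subst hv'
      rfl
    refine ⟨Coloring.mk D ?_⟩
    intro v w hadj
    have he : G.connectedComponentMk w = G.connectedComponentMk v :=
      (ConnectedComponent.connectedComponentMk_eq_of_adj hadj).symm
    have hv : v ∈ (G.connectedComponentMk v).supp := rfl
    have hw : w ∈ (G.connectedComponentMk v).supp :=
      (ConnectedComponent.mem_supp_iff _ _).mpr he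
    rw [hD _ v hv, hD _ w hw]
    exact (CC (G.connectedComponentMk v)).valid hadj
  refine le_antisymm hcol.chromaticNumber_le ?_
  obtain ⟨t, ht⟩ := G.exists_isNClique_cliqueNum
  calc (G.cliqueNum : ℕ∞) = (t.card : ℕ∞) := by rw [ht.2]
    _ ≤ G.chromaticNumber := ht.1.card_le_chromaticNumber

lemma aux_hered {V : Type*} (G : SimpleGraph V)
    (h : ∀ c : G.ConnectedComponent,
      (G.induce c.supp).Colorable 2 ∨ (G.induce c.supp).IsCompleteMultipartite')
    (S : Set V) :
    ∀ c' : (G.induce S).ConnectedComponent,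
      ((G.induce S).induce c'.supp).Colorable 2 ∨
        ((G.induce S).induce c'.supp).IsCompleteMultipartite' := by
  intro c'
  obtain ⟨w0, hw0⟩ := c'.exists_rep
  set c : G.ConnectedComponent := G.connectedComponentMk ↑w0 with hc
  have hm : ∀ x : ↥c'.supp, ((x : ↥S) : V) ∈ c.supp := by
    rintro ⟨x, hx⟩
    have hx' : (G.induce S).connectedComponentMk x = (G.induce S).connectedComponentMk w0 :=
      ((ConnectedComponent.mem_supp_iff _ _).mp hx).trans hw0.symm
    have hr : (G.induce S).Reachable x w0 := ConnectedComponent.exact hx'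
    have hr' : G.Reachable ↑x ↑w0 := hr.map (Embedding.induce S).toHom
    exact (ConnectedComponent.mem_supp_iff _ _).mpr (ConnectedComponent.sound hr')
  let f : ((G.induce S).induce c'.supp) ↪g (G.induce c.supp) :=
    { toFun := fun x => ⟨x.val.val, hm x⟩
      inj' := fun a b hab => by simpa [Subtype.ext_iff] using hab
      map_rel_iff' := fun {a b} => Iff.rfl }
  rcases h c with hbip | hcm
  · exact Or.inl (Colorable.of_hom f.toHom hbip)
  · refine Or.inr (fun a b d hab hbd had => ?_)
    exact hcm (fun h' => hab (f.map_adj_iff.mp h')) (fun h' => hbd (f.map_adj_iff.mp h'))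
      (f.map_adj_iff.mpr had)

/-- If each connected component of a graph is bipartite or complete
multipartite, then the graph is perfect and paw-free. -/
theorem isPerfect_and_pawFree_of_components {V : Type*} [Fintype V]
    (G : SimpleGraph V)
    (h : ∀ c : G.ConnectedComponent,
      (G.induce c.supp).Colorable 2 ∨ (G.induce c.supp).IsCompleteMultipartite') :
    G.IsPerfect ∧ G.PawFree := by
  classical
  constructor
  · intro S
    haveI : Fintype ↥S := Fintype.ofFinite _
    exact aux_key (G.induce S) (aux_hered G h S)
  · rintro ⟨S, ⟨e⟩⟩
    let x : Fin 4 → ↥S := fun i => e.symm i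
    have hAdj : ∀ i j : Fin 4, G.Adj ↑(x i) ↑(x j) ↔ pawGraph.Adj i j := by
      intro i j
      have h1 : (G.induce S).Adj (x i) (x j) ↔ pawGraph.Adj i j := by
        rw [show pawGraph.Adj i j ↔ pawGraph.Adj (e (x i)) (e (x j)) by
          simp [x]]
        exact e.map_adj_iff.symm
      rw [← h1]
      rfl
    have p01 : pawGraph.Adj 0 1 := by simp [pawGraph, SimpleGraph.fromEdgeSet_adj]
    have p02 : pawGraph.Adj 0 2 := by simp [pawGraph, SimpleGraph.fromEdgeSet_adj]
    have p12 : pawGraph.Adj 1 2 := by simp [pawGraph, SimpleGraph.fromEdgeSet_adj]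
    have p23 : pawGraph.Adj 2 3 := by simp [pawGraph, SimpleGraph.fromEdgeSet_adj]
    have p03 : ¬ pawGraph.Adj 0 3 := by simp [pawGraph, SimpleGraph.fromEdgeSet_adj]
    have p31 : ¬ pawGraph.Adj 3 1 := by simp [pawGraph, SimpleGraph.fromEdgeSet_adj]
    set c : G.ConnectedComponent := G.connectedComponentMk ↑(x 2) with hc
    have m0 : (↑(x 0) : V) ∈ c.supp :=
      (ConnectedComponent.mem_supp_iff _ _).mpr
        (ConnectedComponent.connectedComponentMk_eq_of_adj ((hAdj 0 2).mpr p02))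
    have m1 : (↑(x 1) : V) ∈ c.supp :=
      (ConnectedComponent.mem_supp_iff _ _).mpr
        (ConnectedComponent.connectedComponentMk_eq_of_adj ((hAdj 1 2).mpr p12))
    have m2 : (↑(x 2) : V) ∈ c.supp := rfl
    have m3 : (↑(x 3) : V) ∈ c.supp :=
      (ConnectedComponent.mem_supp_iff _ _).mpr
        (ConnectedComponent.connectedComponentMk_eq_of_adj ((hAdj 2 3).mpr p23).symm)
    let y0 : ↥c.supp := ⟨_, m0⟩
    let y1 : ↥c.supp := ⟨_, m1⟩
    let y2 : ↥c.supp := ⟨_, m2⟩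
    let y3 : ↥c.supp := ⟨_, m3⟩
    have a01 : (G.induce c.supp).Adj y0 y1 := (hAdj 0 1).mpr p01
    have a02 : (G.induce c.supp).Adj y0 y2 := (hAdj 0 2).mpr p02
    have a12 : (G.induce c.supp).Adj y1 y2 := (hAdj 1 2).mpr p12
    have a03 : ¬ (G.induce c.supp).Adj y0 y3 := fun hh => p03 ((hAdj 0 3).mp hh)
    have a31 : ¬ (G.induce c.supp).Adj y3 y1 := fun hh => p31 ((hAdj 3 1).mp hh)
    rcases h c with hbip | hcm
    · have hcf : (G.induce c.supp).CliqueFree 3 := hbip.cliqueFree (by norm_num)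
      exact hcf {y0, y1, y2} (is3Clique_triple_iff.mpr ⟨a01, a02, a12⟩)
    · exact (hcm a03 a31) a01
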